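/- The operators A_l (l = 1,…,N−1) and B_k (k = 1,…,M−1) each commute with the perturbation operator H_1 = y^m ∂_x^n + x^n ∂_y^m. -/

import Mathlib

set_option linter.unusedSectionVars false
set_option maxHeartbeats 1000000


open MvPolynomial

noncomputable def XD {σ : Type*} [DecidableEq σ] (i : σ) :
    Module.End ℝ (MvPolynomial σ ℝ) :=
  (LinearMap.mulLeft ℝ (X i)).comp (pderiv i).toLinearMap

/-- `A_l = n_{l+1} x_l ∂_{x_l} - n_l x_{l+1} ∂_{x_{l+1}}`. -/
noncomputable def opA {N M : ℕ} (n : Fin N → ℕ) (l : ℕ) (hl : l + 1 < N) :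
    Module.End ℝ (MvPolynomial (Fin N ⊕ Fin M) ℝ) :=
  (n ⟨l + 1, hl⟩ : ℝ) • XD (Sum.inl ⟨l, by omega⟩) -
    (n ⟨l, by omega⟩ : ℝ) • XD (Sum.inl ⟨l + 1, hl⟩)

/-- `B_k = m_{k+1} y_k ∂_{y_k} - m_k y_{k+1} ∂_{y_{k+1}}`. -/
noncomputable def opB {N M : ℕ} (m : Fin M → ℕ) (k : ℕ) (hk : k + 1 < M) :
    Module.End ℝ (MvPolynomial (Fin N ⊕ Fin M) ℝ) :=
  (m ⟨k + 1, hk⟩ : ℝ) • XD (Sum.inr ⟨k, by omega⟩) -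
    (m ⟨k, by omega⟩ : ℝ) • XD (Sum.inr ⟨k + 1, hk⟩)

noncomputable def Dxn {N M : ℕ} (n : Fin N → ℕ) :
    Module.End ℝ (MvPolynomial (Fin N ⊕ Fin M) ℝ) :=
  (List.ofFn fun l : Fin N =>
    ((pderiv (Sum.inl l)).toLinearMap : Module.End ℝ (MvPolynomial (Fin N ⊕ Fin M) ℝ)) ^ n l).prod

noncomputable def Dym {N M : ℕ} (m : Fin M → ℕ) :
    Module.End ℝ (MvPolynomial (Fin N ⊕ Fin M) ℝ) :=
  (List.ofFn fun k : Fin M =>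
    ((pderiv (Sum.inr k)).toLinearMap : Module.End ℝ (MvPolynomial (Fin N ⊕ Fin M) ℝ)) ^ m k).prod



section Aux

variable {σ : Type*} [DecidableEq σ]

noncomputable abbrev Dop (i : σ) : Module.End ℝ (MvPolynomial σ ℝ) :=
  (pderiv i).toLinearMap

noncomputable abbrev Lop (p : MvPolynomial σ ℝ) : Module.End ℝ (MvPolynomial σ ℝ) :=
  LinearMap.mulLeft ℝ p

lemma Dop_Lop (i : σ) (p : MvPolynomial σ ℝ) :
    Dop i * Lop p = Lop (pderiv i p) + Lop p * Dop i := by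
  refine LinearMap.ext fun f => ?_
  simp [Module.End.mul_apply, pderiv_mul]
  ring

lemma Dop_comm (i j : σ) : Dop (σ := σ) i * Dop j = Dop j * Dop i := by
  refine LinearMap.ext fun f => ?_
  simp only [Module.End.mul_apply, LinearMap.coe_mk, Derivation.coeFn_coe]
  induction f using MvPolynomial.induction_on' with
  | monomial s a =>
    simp only [pderiv_monomial]
    by_cases h : i = j
    · subst h; rfl
    · congr 1
      · rw [tsub_tsub, tsub_tsub, add_comm]
      · rw [Finsupp.tsub_apply, Finsupp.tsub_apply,
          Finsupp.single_eq_of_ne (Ne.symm h), Finsupp.single_eq_of_ne h]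
        simp only [Nat.sub_zero]
        push_cast
        ring
  | add p q hp hq => simp [hp, hq]

lemma Lop_comm (p q : MvPolynomial σ ℝ) : Lop p * Lop q = Lop q * Lop p := by
  rw [Module.End.mul_eq_comp, Module.End.mul_eq_comp, ← LinearMap.mulLeft_mul,
    ← LinearMap.mulLeft_mul, mul_comm]

/-- The key commutation relation: `E * T = c • T + T * E`. -/
def ComRel (E T : Module.End ℝ (MvPolynomial σ ℝ)) (c : ℝ) : Prop :=
  E * T = c • T + T * E

lemma ComRel.one (E : Module.End ℝ (MvPolynomial σ ℝ)) : ComRel E 1 0 := by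
  simp [ComRel]

lemma ComRel.mul {E S T : Module.End ℝ (MvPolynomial σ ℝ)} {a b : ℝ}
    (hS : ComRel E S a) (hT : ComRel E T b) : ComRel E (S * T) (a + b) := by
  unfold ComRel at *
  rw [← mul_assoc, hS, add_mul, mul_assoc, hT, smul_mul_assoc, mul_add, mul_smul_comm,
    add_smul, ← mul_assoc]
  abel

lemma ComRel.pow {E T : Module.End ℝ (MvPolynomial σ ℝ)} {a : ℝ}
    (h : ComRel E T a) (k : ℕ) : ComRel E (T ^ k) (k * a) := by
  induction k with
  | zero => simpa using ComRel.one E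
  | succ k ih =>
    have h2 : ((k + 1 : ℕ) : ℝ) * a = (k : ℝ) * a + a := by push_cast; ring
    rw [h2, pow_succ]
    exact ih.mul h

lemma ComRel.ofFnProd {E : Module.End ℝ (MvPolynomial σ ℝ)} {nn : ℕ}
    {f : Fin nn → Module.End ℝ (MvPolynomial σ ℝ)} {c : Fin nn → ℝ}
    (h : ∀ j, ComRel E (f j) (c j)) :
    ComRel E (List.ofFn f).prod (∑ j, c j) := by
  induction nn with
  | zero => simpa using ComRel.one E
  | succ nn ih =>
    rw [List.ofFn_succ, List.prod_cons, Fin.sum_univ_succ]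
    exact (h 0).mul (ih fun j => h j.succ)

lemma XD_eq (i : σ) : XD i = Lop (X i) * Dop i := rfl

lemma comRel_XD_Dop (i j : σ) :
    ComRel (XD i) (Dop j) (if i = j then (-1 : ℝ) else 0) := by
  unfold ComRel
  rw [XD_eq, mul_assoc, Dop_comm, ← mul_assoc, ← mul_assoc (Dop j), Dop_Lop, add_mul,
    mul_assoc (Lop (X i)) (Dop j) (Dop i)]
  by_cases h : i = j
  · subst h
    rw [pderiv_X_self, if_pos rfl]
    have h1 : Lop (1 : MvPolynomial σ ℝ) * Dop i = Dop i := by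
      refine LinearMap.ext fun f => ?_
      simp [Module.End.mul_apply]
    rw [h1]
    module
  · rw [pderiv_X_of_ne h, if_neg h]
    have h1 : Lop (0 : MvPolynomial σ ℝ) * Dop i = 0 := by
      refine LinearMap.ext fun f => ?_
      simp [Module.End.mul_apply]
    rw [h1]
    simp

lemma comRel_XD_Lop {i : σ} {p : MvPolynomial σ ℝ} {c : ℝ}
    (h : X i * pderiv i p = c • p) : ComRel (XD i) (Lop p) c := by
  unfold ComRel
  rw [XD_eq, mul_assoc, Dop_Lop, mul_add]
  rw [show Lop (X i) * Lop (pderiv i p) = Lop (X i * pderiv i p) from by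
    rw [Module.End.mul_eq_comp, ← LinearMap.mulLeft_mul]]
  rw [h, ← mul_assoc, Lop_comm (X i) p, mul_assoc, ← XD_eq]
  congr 1
  refine LinearMap.ext fun f => ?_
  simp [smul_mul_assoc]

lemma comRel_XD_LopX (i j : σ) :
    ComRel (XD i) (Lop (X j)) (if i = j then (1 : ℝ) else 0) := by
  apply comRel_XD_Lop
  by_cases h : i = j
  · subst h; simp
  · rw [pderiv_X_of_ne (Ne.symm h)]
    simp [if_neg h]

/-- left multiplication as a monoid hom. -/
noncomputable def lmulHom : MvPolynomial σ ℝ →* Module.End ℝ (MvPolynomial σ ℝ) where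
  toFun := Lop
  map_one' := by ext f; simp
  map_mul' p q := LinearMap.mulLeft_mul ℝ _ p q

lemma Lop_prod {nn : ℕ} (g : Fin nn → MvPolynomial σ ℝ) (e : Fin nn → ℕ) :
    Lop (∏ j, g j ^ e j) = (List.ofFn fun j => Lop (g j) ^ e j).prod := by
  have h1 : Lop (∏ j, g j ^ e j) = lmulHom (σ := σ) (∏ j, g j ^ e j) := rfl
  rw [h1, ← Fin.prod_ofFn, map_list_prod, List.map_ofFn,
    show ⇑(lmulHom (σ := σ)) ∘ (fun j => g j ^ e j) = fun j => Lop (g j) ^ e j from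
      funext fun j => map_pow _ _ _]

lemma commute_combo {E1 E2 P Q : Module.End ℝ (MvPolynomial σ ℝ)} {a b : ℝ}
    (h1P : ComRel E1 P (-b)) (h1Q : ComRel E1 Q b)
    (h2P : ComRel E2 P (-a)) (h2Q : ComRel E2 Q a) :
    Commute (a • E1 - b • E2) (P + Q) := by
  unfold ComRel at h1P h1Q h2P h2Q
  show _ = _
  simp only [mul_add, add_mul, sub_mul, mul_sub, smul_mul_assoc, mul_smul_comm,
    h1P, h1Q, h2P, h2Q]
  module

end Aux

section Main

lemma ComRel.of_eq {σ : Type*} [DecidableEq σ] {E T : Module.End ℝ (MvPolynomial σ ℝ)}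
    {c c' : ℝ} (h : ComRel E T c) (e : c = c') : ComRel E T c' := e ▸ h

lemma comRel_XD_LopProd {σ : Type*} [DecidableEq σ] (u : σ) {nn : ℕ}
    (v : Fin nn → σ) (e : Fin nn → ℕ) :
    ComRel (XD u) (Lop (∏ j, X (v j) ^ e j))
      (∑ j, (e j : ℝ) * (if u = v j then 1 else 0)) := by
  rw [Lop_prod]
  exact ComRel.ofFnProd fun j => (comRel_XD_LopX u (v j)).pow (e j)

lemma comRel_XD_DopProd {σ : Type*} [DecidableEq σ] (u : σ) {nn : ℕ}
    (v : Fin nn → σ) (e : Fin nn → ℕ) :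
    ComRel (XD u) ((List.ofFn fun j => Dop (v j) ^ e j).prod)
      (∑ j, (e j : ℝ) * (if u = v j then -1 else 0)) :=
  ComRel.ofFnProd fun j => (comRel_XD_Dop u (v j)).pow (e j)

variable {N M : ℕ} (n : Fin N → ℕ) (m : Fin M → ℕ)


-- the four inl relations
lemma cA1 (i : Fin N) :
    ComRel (XD (Sum.inl i)) (Lop (∏ k : Fin M, X ((Sum.inr k : Fin N ⊕ Fin M)) ^ m k)) 0 :=
  (comRel_XD_LopProd (Sum.inl i) (fun k : Fin M => (Sum.inr k : Fin N ⊕ Fin M)) m).of_eq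
    (by simp)

lemma cA2 (i : Fin N) :
    ComRel (XD (Sum.inl i)) (Dxn (M := M) n) (-(n i : ℝ)) :=
  (comRel_XD_DopProd (Sum.inl i) (fun l : Fin N => (Sum.inl l : Fin N ⊕ Fin M)) n).of_eq
    (by simp [Finset.sum_ite_eq])

lemma cA3 (i : Fin N) :
    ComRel (XD (Sum.inl i)) (Lop (∏ l : Fin N, X ((Sum.inl l : Fin N ⊕ Fin M)) ^ n l)) (n i : ℝ) :=
  (comRel_XD_LopProd (Sum.inl i) (fun l : Fin N => (Sum.inl l : Fin N ⊕ Fin M)) n).of_eq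
    (by simp [Finset.sum_ite_eq])

lemma cA4 (i : Fin N) :
    ComRel (XD (Sum.inl i)) (Dym (N := N) m) 0 :=
  (comRel_XD_DopProd (Sum.inl i) (fun k : Fin M => (Sum.inr k : Fin N ⊕ Fin M)) m).of_eq
    (by simp)

-- the four inr relations
lemma cB1 (i : Fin M) :
    ComRel (XD (Sum.inr i)) (Lop (∏ k : Fin M, X ((Sum.inr k : Fin N ⊕ Fin M)) ^ m k)) (m i : ℝ) :=
  (comRel_XD_LopProd (Sum.inr i) (fun k : Fin M => (Sum.inr k : Fin N ⊕ Fin M)) m).of_eq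
    (by simp [Finset.sum_ite_eq])

lemma cB2 (i : Fin M) :
    ComRel (XD (Sum.inr i)) (Dxn (M := M) n) 0 :=
  (comRel_XD_DopProd (Sum.inr i) (fun l : Fin N => (Sum.inl l : Fin N ⊕ Fin M)) n).of_eq
    (by simp)

lemma cB3 (i : Fin M) :
    ComRel (XD (Sum.inr i)) (Lop (∏ l : Fin N, X ((Sum.inl l : Fin N ⊕ Fin M)) ^ n l)) 0 :=
  (comRel_XD_LopProd (Sum.inr i) (fun l : Fin N => (Sum.inl l : Fin N ⊕ Fin M)) n).of_eq
    (by simp)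

lemma cB4 (i : Fin M) :
    ComRel (XD (Sum.inr i)) (Dym (N := N) m) (-(m i : ℝ)) :=
  (comRel_XD_DopProd (Sum.inr i) (fun k : Fin M => (Sum.inr k : Fin N ⊕ Fin M)) m).of_eq
    (by simp [Finset.sum_ite_eq])

end Main

/-- `H₁ = y^m ∂_x^n + x^n ∂_y^m`. -/
noncomputable def H1 {N M : ℕ} (n : Fin N → ℕ) (m : Fin M → ℕ) :
    Module.End ℝ (MvPolynomial (Fin N ⊕ Fin M) ℝ) :=
  (LinearMap.mulLeft ℝ (∏ k : Fin M, X (Sum.inr k) ^ m k)).comp (Dxn n) +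
    (LinearMap.mulLeft ℝ (∏ l : Fin N, X (Sum.inl l) ^ n l)).comp (Dym m)

/-- each `A_l` and each `B_k` commutes with `H₁`. -/
theorem opA_opB_commute_H1 {N M : ℕ} (hN : 1 ≤ N) (hM : 1 ≤ M)
    (n : Fin N → ℕ) (m : Fin M → ℕ) :
    (∀ (l : ℕ) (hl : l + 1 < N), Commute (opA (M := M) n l hl) (H1 n m)) ∧
    (∀ (k : ℕ) (hk : k + 1 < M), Commute (opB (N := N) m k hk) (H1 n m)) := by
  constructor
  · intro l hl
    have h1P := ((cA1 (N := N) m ⟨l, by omega⟩).mul (cA2 (M := M) n ⟨l, by omega⟩)).of_eq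
      (zero_add _)
    have h1Q := ((cA3 (M := M) n ⟨l, by omega⟩).mul (cA4 (N := N) m ⟨l, by omega⟩)).of_eq
      (add_zero _)
    have h2P := ((cA1 (N := N) m ⟨l + 1, hl⟩).mul (cA2 (M := M) n ⟨l + 1, hl⟩)).of_eq
      (zero_add _)
    have h2Q := ((cA3 (M := M) n ⟨l + 1, hl⟩).mul (cA4 (N := N) m ⟨l + 1, hl⟩)).of_eq
      (add_zero _)
    unfold opA H1
    rw [← Module.End.mul_eq_comp, ← Module.End.mul_eq_comp]
    exact commute_combo h1P h1Q h2P h2Q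
  · intro k hk
    have h1P := ((cB3 (M := M) n ⟨k, by omega⟩).mul (cB4 (N := N) m ⟨k, by omega⟩)).of_eq
      (zero_add _)
    have h1Q := ((cB1 (N := N) m ⟨k, by omega⟩).mul (cB2 (M := M) n ⟨k, by omega⟩)).of_eq
      (add_zero _)
    have h2P := ((cB3 (M := M) n ⟨k + 1, hk⟩).mul (cB4 (N := N) m ⟨k + 1, hk⟩)).of_eq
      (zero_add _)
    have h2Q := ((cB1 (N := N) m ⟨k + 1, hk⟩).mul (cB2 (M := M) n ⟨k + 1, hk⟩)).of_eq
      (add_zero _)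
    unfold opB H1
    rw [← Module.End.mul_eq_comp, ← Module.End.mul_eq_comp]
    have := commute_combo h1P h1Q h2P h2Q
    rwa [add_comm (Lop (∏ l : Fin N, X (Sum.inl l) ^ n l) * Dym m)
      (Lop (∏ j : Fin M, X (Sum.inr j) ^ m j) * Dxn n)] at this
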